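/- Let V and W be K-vector spaces, ψ a K-linear representation of Ĝ on V, and φ a K-linear representation of G on W. Let T ≤ G and Q ≤ Ĝ be subgroups, and let v ∈ V and w ∈ W satisfy ψ_γ(v) = v for all γ ∈ Q and φ_g(w) = w for all g ∈ T. Then |G|⁻¹ · Σ_{γ ∈ Ĝ} Σ_{g ∈ Q^⊥} γ(g)⁻¹ · (φ_g(w) ⊗ ψ_γ(v)) = (|Q^⊥| · |Q ∩ T^⊥|)⁻¹ · Σ_{γ ∈ T^⊥} Σ_{g ∈ Q^⊥} γ(g)⁻¹ · (φ_g(w) ⊗ ψ_γ(v)) in W ⊗_K V. (The left-hand side is the Yetter-Drinfel'd quasisymmetry σ_{V,W}(v ⊗ w); the lemma says it reduces to a sum over T^⊥ × Q^⊥.) -/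
import Mathlib


open TensorProduct

/-- For a subgroup `Q` of the character group `Ĝ = G →* Kˣ`, its perp
`Q^⊥ = {g ∈ G | γ(g) = 1 for all γ ∈ Q}`, a subgroup of `G`. -/
def charPerp {K : Type*} [Field K] {G : Type*} [CommGroup G] (Q : Subgroup (G →* Kˣ)) :
    Subgroup G where
  carrier := {g | ∀ γ ∈ Q, γ g = 1}
  one_mem' := fun γ _ => map_one γ
  mul_mem' := fun {a b} ha hb γ hγ => by rw [map_mul, ha γ hγ, hb γ hγ, one_mul]
  inv_mem' := fun {a} ha γ hγ => by rw [map_inv, ha γ hγ, inv_one]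

/-- For a subgroup `T` of `G`, its perp `T^⊥ = {γ ∈ Ĝ | γ(t) = 1 for all t ∈ T}`,
a subgroup of the character group `Ĝ = G →* Kˣ`. -/
def groupPerp (K : Type*) [Field K] {G : Type*} [CommGroup G] (T : Subgroup G) :
    Subgroup (G →* Kˣ) where
  carrier := {γ | ∀ t ∈ T, γ t = 1}
  one_mem' := fun t _ => rfl
  mul_mem' := fun {a b} ha hb t ht => by
    rw [MonoidHom.mul_apply, ha t ht, hb t ht, one_mul]
  inv_mem' := fun {a} ha t ht => by
    rw [MonoidHom.inv_apply, ha t ht, inv_one]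

namespace QuasiAux

variable {K : Type*} [Field K] {G : Type*} [CommGroup G]

lemma coe_ne_one' {u : Kˣ} (h : u ≠ 1) : (u : K) ≠ 1 := by
  simpa [Units.val_eq_one] using h

lemma eq_zero_of_eq_smul {M : Type*} [AddCommGroup M] [Module K M] {c : K} {x : M}
    (hc : c ≠ 1) (h : x = c • x) : x = 0 := by
  have h2 : (c - 1) • x = 0 := by rw [sub_smul, one_smul, ← h, sub_self]
  rcases smul_eq_zero.mp h2 with h' | h'
  · exact absurd (sub_eq_zero.mp h') hc
  · exact h'

lemma sum_hom_eq_zero {A : Type*} [CommGroup A] [Fintype A] (χ : A →* Kˣ)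
    (h : ∃ a : A, χ a ≠ 1) : ∑ a : A, ((χ a : K)) = 0 := by
  obtain ⟨a₀, ha₀⟩ := h
  refine eq_zero_of_eq_smul (coe_ne_one' ha₀) ?_
  rw [smul_eq_mul, Finset.mul_sum]
  exact (Fintype.sum_equiv (Equiv.mulLeft a₀⁻¹)
      (fun a : A => ((χ a : K))) (fun a : A => (χ a₀ : K) * ((χ a : K)))
      (fun a => by
        simp only [Equiv.coe_mulLeft, map_mul, map_inv, Units.val_mul]
        rw [Units.val_inv_eq_inv_val, mul_inv_cancel_left₀ (Units.ne_zero _)]))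

def evalHom (R : Subgroup (G →* Kˣ)) (x : G) : R →* Kˣ where
  toFun δ := (δ : G →* Kˣ) x
  map_one' := rfl
  map_mul' _ _ := rfl

lemma sum_subgroup_char {T : Subgroup G} [Fintype T] {γ : G →* Kˣ}
    (h : ∃ t ∈ T, γ t ≠ 1) : ∑ t : T, ((γ (t : G) : K)) = 0 := by
  obtain ⟨t, ht, hne⟩ := h
  exact sum_hom_eq_zero (γ.comp T.subtype) ⟨⟨t, ht⟩, hne⟩

lemma sum_subgroup_eval {R : Subgroup (G →* Kˣ)} [Fintype R] {x : G}
    (h : ∃ δ ∈ R, δ x ≠ 1) : ∑ δ : R, (((δ : G →* Kˣ)) x : K) = 0 := by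
  obtain ⟨δ, hδ, hne⟩ := h
  exact sum_hom_eq_zero (evalHom R x) ⟨⟨δ, hδ⟩, hne⟩

lemma sum_char_all [Fintype G] {γ : G →* Kˣ} (h : γ ≠ 1) : ∑ g : G, ((γ g : K)) = 0 := by
  refine sum_hom_eq_zero γ ?_
  by_contra hc; push_neg at hc
  exact h (MonoidHom.ext fun g => by simpa using hc g)

def infEquiv {H : Type*} [Group H] (A B : Subgroup H) :
    {a : A // (a : H) ∈ B} ≃ ↥(A ⊓ B) where
  toFun x := ⟨x.1.1, Subgroup.mem_inf.mpr ⟨x.1.2, x.2⟩⟩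
  invFun y := ⟨⟨y.1, (Subgroup.mem_inf.mp y.2).1⟩, (Subgroup.mem_inf.mp y.2).2⟩
  left_inv _ := rfl
  right_inv _ := rfl


lemma mem_charPerp_iff {Q : Subgroup (G →* Kˣ)} {g : G} :
    g ∈ charPerp Q ↔ ∀ γ ∈ Q, γ g = 1 := Iff.rfl

lemma mem_groupPerp_iff {T : Subgroup G} {γ : G →* Kˣ} :
    γ ∈ groupPerp K T ↔ ∀ t ∈ T, γ t = 1 := Iff.rfl

lemma natCard_filter {α : Type*} [Fintype α] (p : α → Prop) [DecidablePred p] :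
    (Finset.univ.filter p).card = Nat.card {x // p x} := by
  rw [← Nat.card_eq_finsetCard]
  exact Nat.card_congr (Equiv.subtypeEquivRight (by simp))

lemma card_mul_card_perp [Fintype G] [Fintype (G →* Kˣ)] (Q : Subgroup (G →* Kˣ)) :
    (Nat.card Q : K) * (Nat.card (charPerp Q) : K) = (Nat.card G : K) := by
  classical
  have e1 : ∀ δ : Q, (∑ g : G, (((δ : G →* Kˣ)) g : K)) =
      if (δ : G →* Kˣ) = 1 then (Nat.card G : K) else 0 := by
    intro δ
    split_ifs with h
    · simp [h, Nat.card_eq_fintype_card]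
    · exact sum_char_all h
  have e2 : ∀ g : G, (∑ δ : Q, (((δ : G →* Kˣ)) g : K)) =
      if g ∈ charPerp Q then (Nat.card Q : K) else 0 := by
    intro g
    split_ifs with h
    · rw [Finset.sum_congr rfl fun δ _ => by
        rw [(mem_charPerp_iff.mp h) (δ : G →* Kˣ) δ.2, Units.val_one]]
      simp [Nat.card_eq_fintype_card]
    · refine sum_subgroup_eval ?_
      rw [mem_charPerp_iff] at h; push_neg at h; exact h
  have swap := Finset.sum_comm (s := (Finset.univ : Finset Q))
      (t := (Finset.univ : Finset G))
      (f := fun δ g => (((δ : G →* Kˣ)) g : K))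
  calc (Nat.card Q : K) * (Nat.card (charPerp Q) : K)
      = ∑ g : G, ∑ δ : Q, (((δ : G →* Kˣ)) g : K) := by
        rw [Finset.sum_congr rfl fun g _ => e2 g, ← Finset.sum_filter, Finset.sum_const,
          natCard_filter, nsmul_eq_mul, mul_comm]
    _ = ∑ δ : Q, ∑ g : G, (((δ : G →* Kˣ)) g : K) := swap.symm
    _ = (Nat.card G : K) := by
        rw [Finset.sum_congr rfl fun δ _ => e1 δ]
        simp only [OneMemClass.coe_eq_one]
        rw [Finset.sum_ite_eq' Finset.univ (1 : Q) (fun _ => (Nat.card G : K)),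
          if_pos (Finset.mem_univ _)]

lemma card_inf_eq [Fintype G] [Fintype (G →* Kˣ)] (T : Subgroup G) (Q : Subgroup (G →* Kˣ)) :
    (Nat.card ↥(Q ⊓ groupPerp K T) : K) * (Nat.card T : K)
      = (Nat.card ↥(T ⊓ charPerp Q) : K) * (Nat.card Q : K) := by
  classical
  have e1 : ∀ δ : Q, (∑ t : T, (((δ : G →* Kˣ)) (t : G) : K)) =
      if (δ : G →* Kˣ) ∈ groupPerp K T then (Nat.card T : K) else 0 := by
    intro δ
    split_ifs with h
    · rw [Finset.sum_congr rfl fun t _ => by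
        rw [(mem_groupPerp_iff.mp h) (t : G) t.2, Units.val_one]]
      simp [Nat.card_eq_fintype_card]
    · refine sum_subgroup_char ?_
      rw [mem_groupPerp_iff] at h; push_neg at h; exact h
  have e2 : ∀ t : T, (∑ δ : Q, (((δ : G →* Kˣ)) (t : G) : K)) =
      if (t : G) ∈ charPerp Q then (Nat.card Q : K) else 0 := by
    intro t
    split_ifs with h
    · rw [Finset.sum_congr rfl fun δ _ => by
        rw [(mem_charPerp_iff.mp h) (δ : G →* Kˣ) δ.2, Units.val_one]]
      simp [Nat.card_eq_fintype_card]
    · refine sum_subgroup_eval ?_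
      rw [mem_charPerp_iff] at h; push_neg at h; exact h
  have swap := Finset.sum_comm (s := (Finset.univ : Finset Q))
      (t := (Finset.univ : Finset T))
      (f := fun δ t => (((δ : G →* Kˣ)) (t : G) : K))
  calc (Nat.card ↥(Q ⊓ groupPerp K T) : K) * (Nat.card T : K)
      = ∑ δ : Q, ∑ t : T, (((δ : G →* Kˣ)) (t : G) : K) := by
        rw [Finset.sum_congr rfl fun δ _ => e1 δ, ← Finset.sum_filter, Finset.sum_const,
          natCard_filter, Nat.card_congr (infEquiv Q (groupPerp K T)), nsmul_eq_mul]
    _ = ∑ t : T, ∑ δ : Q, (((δ : G →* Kˣ)) (t : G) : K) := swap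
    _ = (Nat.card ↥(T ⊓ charPerp Q) : K) * (Nat.card Q : K) := by
        rw [Finset.sum_congr rfl fun t _ => e2 t, ← Finset.sum_filter, Finset.sum_const,
          natCard_filter, Nat.card_congr (infEquiv T (charPerp Q)), nsmul_eq_mul]

end QuasiAux

set_option maxHeartbeats 1000000 in
open QuasiAux in
/-- If `v` is fixed by `Q ≤ Ĝ` and `w` is fixed by `T ≤ G`, the quasisymmetry
`σ(v ⊗ w) = |G|⁻¹ ∑_{γ ∈ Ĝ} ∑_{g ∈ Q^⊥} γ(g)⁻¹ φ_g(w) ⊗ ψ_γ(v)` reduces to a sum over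
`T^⊥ × Q^⊥` with coefficient `(|Q^⊥|·|Q ∩ T^⊥|)⁻¹`. -/
theorem quasisymmetry_reduction
    (K : Type*) [Field K] [IsAlgClosed K] [CharZero K]
    (G : Type*) [CommGroup G] [Fintype G] [Fintype (G →* Kˣ)]
    (V W : Type*) [AddCommGroup V] [Module K V] [AddCommGroup W] [Module K W]
    (ψ : (G →* Kˣ) →* (V ≃ₗ[K] V)) (φ : G →* (W ≃ₗ[K] W))
    (T : Subgroup G) (Q : Subgroup (G →* Kˣ))
    (v : V) (w : W)
    (hv : ∀ γ ∈ Q, ψ γ v = v) (hw : ∀ g ∈ T, φ g w = w) :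
    (Fintype.card G : K)⁻¹ •
      ∑ γ : G →* Kˣ, ∑ᶠ g ∈ (charPerp Q : Set G),
        ((γ g : K))⁻¹ • ((φ g w) ⊗ₜ[K] (ψ γ v)) =
    ((Nat.card ↥(charPerp Q) * Nat.card ↥(Q ⊓ groupPerp K T) : ℕ) : K)⁻¹ •
      ∑ᶠ γ ∈ (groupPerp K T : Set (G →* Kˣ)), ∑ᶠ g ∈ (charPerp Q : Set G),
        ((γ g : K))⁻¹ • ((φ g w) ⊗ₜ[K] (ψ γ v)) := by
  classical
  have hconvS : ∀ (f : G → W ⊗[K] V),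
      (∑ᶠ g ∈ (charPerp Q : Set G), f g) = ∑ g : charPerp Q, f (g : G) := by
    intro f
    rw [finsum_mem_eq_toFinset_sum f (charPerp Q : Set G)]
    exact Finset.sum_subtype _ (fun x => by simp) f
  have hconvP : ∀ (f : (G →* Kˣ) → W ⊗[K] V),
      (∑ᶠ γ ∈ (groupPerp K T : Set (G →* Kˣ)), f γ)
        = ∑ γ : groupPerp K T, f (γ : G →* Kˣ) := by
    intro f
    rw [finsum_mem_eq_toFinset_sum f (groupPerp K T : Set (G →* Kˣ))]
    exact Finset.sum_subtype _ (fun x => by simp) f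
  set F : (G →* Kˣ) → W ⊗[K] V :=
    fun γ => ∑ g : charPerp Q, ((γ (g : G) : K))⁻¹ • ((φ (g : G) w) ⊗ₜ[K] (ψ γ v)) with hF
  have hFdef : ∀ γ : G →* Kˣ,
      F γ = ∑ g : charPerp Q, ((γ (g : G) : K))⁻¹ • ((φ (g : G) w) ⊗ₜ[K] (ψ γ v)) :=
    fun γ => by simp only [hF]
  have h1 : (∑ γ : G →* Kˣ, ∑ᶠ g ∈ (charPerp Q : Set G),
        ((γ g : K))⁻¹ • ((φ g w) ⊗ₜ[K] (ψ γ v))) = ∑ γ : G →* Kˣ, F γ :=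
    Finset.sum_congr rfl fun γ _ => ((hconvS _).trans (hFdef γ).symm)
  have h2 : (∑ᶠ γ ∈ (groupPerp K T : Set (G →* Kˣ)), ∑ᶠ g ∈ (charPerp Q : Set G),
        ((γ g : K))⁻¹ • ((φ g w) ⊗ₜ[K] (ψ γ v))) = ∑ γ : groupPerp K T, F ↑γ := by
    rw [hconvP (fun γ' => ∑ᶠ g ∈ (charPerp Q : Set G),
      ((γ' g : K))⁻¹ • ((φ g w) ⊗ₜ[K] (ψ γ' v)))]
    exact Finset.sum_congr rfl fun γ _ => ((hconvS _).trans (hFdef _).symm)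
  rw [h1, h2, ← Nat.card_eq_fintype_card]
  have hψmul : ∀ (γ δ : G →* Kˣ), δ ∈ Q → ψ (γ * δ) v = ψ γ v := by
    intro γ δ hδ
    rw [map_mul]
    show (ψ γ) ((ψ δ) v) = (ψ γ) v
    rw [hv δ hδ]
  have hφT : ∀ (g t : G), t ∈ T → φ (g * t⁻¹) w = φ g w := by
    intro g t ht
    have hinv : φ t⁻¹ w = w := by
      apply (φ t).injective
      have h' : (φ t) ((φ t⁻¹) w) = (φ (t * t⁻¹)) w := by rw [map_mul]; rfl
      rw [h', mul_inv_cancel, map_one, hw t ht]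
      rfl
    rw [map_mul]
    show (φ g) ((φ t⁻¹) w) = (φ g) w
    rw [hinv]
  have hD : ∀ x : G, x ∉ charPerp Q →
      (∑ γ : G →* Kˣ, ((γ x : K))⁻¹ • ((φ x w) ⊗ₜ[K] (ψ γ v))) = 0 := by
    intro x hx
    rw [QuasiAux.mem_charPerp_iff] at hx; push_neg at hx
    obtain ⟨δ, hδQ, hδx⟩ := hx
    refine QuasiAux.eq_zero_of_eq_smul (c := ((δ x : K))⁻¹) ?_ ?_
    · simp only [ne_eq, inv_eq_one]
      exact QuasiAux.coe_ne_one' hδx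
    · have hcomp := Equiv.sum_comp (Equiv.mulRight δ)
        (fun γ : G →* Kˣ => ((γ x : K))⁻¹ • ((φ x w) ⊗ₜ[K] (ψ γ v)))
      simp only [Equiv.coe_mulRight] at hcomp
      conv_lhs => rw [← hcomp]
      rw [Finset.smul_sum]
      refine Finset.sum_congr rfl fun γ _ => ?_
      rw [hψmul γ δ hδQ, smul_smul]
      congr 1
      rw [MonoidHom.mul_apply, Units.val_mul]
      ring
  have part1 : (∑ γ : G →* Kˣ, (∑ t : T, ((γ (t : G) : K))) • F γ)
      = (Nat.card T : K) • ∑ γ : groupPerp K T, F ↑γ := by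
    have e : ∀ γ : G →* Kˣ, (∑ t : T, ((γ (t : G) : K))) • F γ
        = if γ ∈ groupPerp K T then (Nat.card T : K) • F γ else 0 := by
      intro γ
      split_ifs with h
      · congr 1
        rw [Finset.sum_congr rfl fun t _ => by
          rw [(QuasiAux.mem_groupPerp_iff.mp h) (t : G) t.2, Units.val_one]]
        simp [Nat.card_eq_fintype_card]
      · rw [QuasiAux.sum_subgroup_char
          (by rw [QuasiAux.mem_groupPerp_iff] at h; push_neg at h; exact h), zero_smul]
    rw [Finset.sum_congr rfl fun γ _ => e γ, ← Finset.sum_filter,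
      Finset.sum_subtype (p := (· ∈ groupPerp K T))
        (Finset.univ.filter (· ∈ groupPerp K T)) (fun x => by simp)
        (fun γ => (Nat.card T : K) • F γ),
      Finset.smul_sum]
  have part2 : (∑ γ : G →* Kˣ, (∑ t : T, ((γ (t : G) : K))) • F γ)
      = (Nat.card ↥(T ⊓ charPerp Q) : K) • ∑ γ : G →* Kˣ, F γ := by
    have expand : ∀ γ : G →* Kˣ, (∑ t : T, ((γ (t : G) : K))) • F γ
        = ∑ t : T, ∑ g : charPerp Q,
            ((γ ((g : G) * (t : G)⁻¹) : K))⁻¹ •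
              ((φ ((g : G) * (t : G)⁻¹) w) ⊗ₜ[K] (ψ γ v)) := by
      intro γ
      rw [Finset.sum_smul]
      refine Finset.sum_congr rfl fun t _ => ?_
      rw [hFdef, Finset.smul_sum]
      refine Finset.sum_congr rfl fun g _ => ?_
      rw [hφT (g : G) (t : G) t.2, smul_smul]
      congr 1
      rw [map_mul, map_inv, Units.val_mul, Units.val_inv_eq_inv_val,
        mul_inv, inv_inv, mul_comm]
    rw [Finset.sum_congr rfl fun γ _ => expand γ, Finset.sum_comm]
    rw [Finset.sum_congr rfl fun t _ => Finset.sum_comm]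
    have inner : ∀ t : T, (∑ g : charPerp Q, ∑ γ : G →* Kˣ,
        ((γ ((g : G) * (t : G)⁻¹) : K))⁻¹ •
          ((φ ((g : G) * (t : G)⁻¹) w) ⊗ₜ[K] (ψ γ v)))
        = if (t : G) ∈ charPerp Q then ∑ γ : G →* Kˣ, F γ else 0 := by
      intro t
      split_ifs with h
      · calc (∑ g : charPerp Q, ∑ γ : G →* Kˣ,
            ((γ ((g : G) * (t : G)⁻¹) : K))⁻¹ •
              ((φ ((g : G) * (t : G)⁻¹) w) ⊗ₜ[K] (ψ γ v)))
            = ∑ g : charPerp Q, ∑ γ : G →* Kˣ,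
              ((γ (g : G) : K))⁻¹ • ((φ (g : G) w) ⊗ₜ[K] (ψ γ v)) := by
              refine Fintype.sum_equiv
                (Equiv.mulRight ((⟨(t : G), h⟩ : charPerp Q))⁻¹) _ _ (fun g => ?_)
              have hcoe : ((g * (⟨(t : G), h⟩ : charPerp Q)⁻¹ : charPerp Q) : G)
                  = (g : G) * (t : G)⁻¹ := rfl
              simp only [Equiv.coe_mulRight, hcoe]
          _ = ∑ γ : G →* Kˣ, F γ := by
              rw [Finset.sum_comm]
      · refine Finset.sum_eq_zero fun g _ => hD _ ?_
        intro hmem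
        have h1' : ((g : G))⁻¹ * ((g : G) * (t : G)⁻¹) ∈ charPerp Q :=
          (charPerp Q).mul_mem ((charPerp Q).inv_mem g.2) hmem
        rw [inv_mul_cancel_left] at h1'
        exact h (by simpa using (charPerp Q).inv_mem h1')
    rw [Finset.sum_congr rfl fun t _ => inner t, ← Finset.sum_filter, Finset.sum_const,
      QuasiAux.natCard_filter, Nat.card_congr (QuasiAux.infEquiv T (charPerp Q)),
      ← Nat.cast_smul_eq_nsmul K]
  -- numeric facts
  have n1 := QuasiAux.card_mul_card_perp (K := K) (G := G) Q
  have n2 := QuasiAux.card_inf_eq (K := K) (G := G) T Q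
  haveI : Nonempty ↥T := ⟨1⟩
  haveI : Nonempty ↥(charPerp Q) := ⟨1⟩
  haveI : Nonempty ↥(Q ⊓ groupPerp K T) := ⟨1⟩
  have hT0 : (Nat.card T : K) ≠ 0 := Nat.cast_ne_zero.mpr Nat.card_pos.ne'
  have hG0 : (Nat.card G : K) ≠ 0 := Nat.cast_ne_zero.mpr Nat.card_pos.ne'
  have hS0 : (Nat.card ↥(charPerp Q) : K) ≠ 0 := Nat.cast_ne_zero.mpr Nat.card_pos.ne'
  have hQP0 : (Nat.card ↥(Q ⊓ groupPerp K T) : K) ≠ 0 := Nat.cast_ne_zero.mpr Nat.card_pos.ne'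
  have hSP : (∑ γ : groupPerp K T, F ↑γ)
      = ((Nat.card T : K)⁻¹ * (Nat.card ↥(T ⊓ charPerp Q) : K)) • ∑ γ : G →* Kˣ, F γ := by
    rw [mul_smul, ← part1.symm.trans part2, smul_smul, inv_mul_cancel₀ hT0, one_smul]
  rw [hSP, smul_smul]
  rw [show ((Nat.card ↥(charPerp Q) * Nat.card ↥(Q ⊓ groupPerp K T) : ℕ) : K)
      = (Nat.card ↥(charPerp Q) : K) * (Nat.card ↥(Q ⊓ groupPerp K T) : K) by push_cast; ring]
  congr 1
  have hkey : (Nat.card ↥(T ⊓ charPerp Q) : K) * (Nat.card G : K)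
      = (Nat.card ↥(charPerp Q) : K) * (Nat.card ↥(Q ⊓ groupPerp K T) : K)
        * (Nat.card T : K) := by
    calc (Nat.card ↥(T ⊓ charPerp Q) : K) * (Nat.card G : K)
        = (Nat.card ↥(T ⊓ charPerp Q) : K) * ((Nat.card Q : K) * (Nat.card ↥(charPerp Q) : K)) := by
          rw [n1]
      _ = (Nat.card ↥(charPerp Q) : K) * ((Nat.card ↥(T ⊓ charPerp Q) : K) * (Nat.card Q : K)) := by
          ring
      _ = (Nat.card ↥(charPerp Q) : K) * ((Nat.card ↥(Q ⊓ groupPerp K T) : K) * (Nat.card T : K)) := by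
          rw [← n2]
      _ = (Nat.card ↥(charPerp Q) : K) * (Nat.card ↥(Q ⊓ groupPerp K T) : K) * (Nat.card T : K) := by
          ring
  set a := (Nat.card G : K) with ha
  set bS := (Nat.card ↥(charPerp Q) : K) with hbS
  set bQP := (Nat.card ↥(Q ⊓ groupPerp K T) : K) with hbQP
  set cT' := (Nat.card T : K) with hcT
  set cTS' := (Nat.card ↥(T ⊓ charPerp Q) : K) with hcTS
  field_simp
  linear_combination -hkey
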